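/- For any n×n matrices A, X₁, …, X_{2n} over a commutative ring, ∑_{σ ∈ S_{2n}} sgn(σ) · tr(A · X_{σ(1)} ⋯ X_{σ(2n)}) = 0. -/

import Mathlib

open Matrix Polynomial Finset

private def lhsSum {S : Type*} [CommRing S] (n : ℕ) (A : Matrix (Fin n) (Fin n) S)
    (X : Fin (2 * n) → Matrix (Fin n) (Fin n) S) : S :=
  ∑ σ : Equiv.Perm (Fin (2 * n)),
    (Equiv.Perm.sign σ : ℤ) • (A * (List.ofFn fun i => X (σ i)).prod).trace


section Jacobi
variable {S : Type*} [CommRing S]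

private lemma derivative_finset_prod {ι : Type*} [DecidableEq ι] (s : Finset ι) (f : ι → S[X]) :
    derivative (∏ i ∈ s, f i) = ∑ i ∈ s, (∏ j ∈ s.erase i, f j) * derivative (f i) := by
  induction s using Finset.induction_on with
  | empty => simp
  | @insert a s ha ih =>
    rw [prod_insert ha, derivative_mul, ih, sum_insert ha, erase_insert ha]
    rw [mul_sum]
    congr 1
    · ring
    · refine Finset.sum_congr rfl fun i hi => ?_
      have hia : i ≠ a := fun h => ha (h ▸ hi)
      rw [Finset.erase_insert_of_ne hia.symm, prod_insert (fun h => ha (Finset.mem_of_mem_erase h))]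
      ring

private lemma derivative_units_smul (u : ℤˣ) (p : S[X]) :
    derivative (u • p) = u • derivative p := by
  rw [Units.smul_def, Units.smul_def]
  exact map_zsmul (derivative (R := S)) _ _

private lemma jacobi_det {m : Type*} [Fintype m] [DecidableEq m] (B : Matrix m m S[X]) :
    derivative B.det = ∑ i, (B.updateCol i fun a => derivative (B a i)).det := by
  rw [Matrix.det_apply, derivative_sum]
  have h1 : ∀ σ : Equiv.Perm m, derivative (Equiv.Perm.sign σ • ∏ j, B (σ j) j)
      = ∑ i, Equiv.Perm.sign σ •
          ((∏ j ∈ univ.erase i, B (σ j) j) * derivative (B (σ i) i)) := by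
    intro σ
    rw [derivative_units_smul, derivative_finset_prod, smul_sum]
  simp_rw [h1]
  rw [Finset.sum_comm]
  refine Finset.sum_congr rfl fun i _ => ?_
  rw [Matrix.det_apply]
  refine Finset.sum_congr rfl fun σ _ => ?_
  congr 1
  rw [← Finset.mul_prod_erase (univ) _ (Finset.mem_univ i)]
  rw [Matrix.updateCol_self]
  rw [mul_comm]
  congr 1
  refine Finset.prod_congr rfl fun j hj => ?_
  rw [Matrix.updateCol_ne (Finset.ne_of_mem_erase hj)]
end Jacobi
private lemma trace_map' {S T : Type*} [NonAssocSemiring S] [NonAssocSemiring T]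
    {m : Type*} [Fintype m] (f : S →+* T) (M : Matrix m m S) :
    (M.map f).trace = f M.trace := by
  simp [Matrix.trace, Matrix.diag, Matrix.map_apply, map_sum]

section Nilpotency
variable {S : Type*} [CommRing S] {m : Type*} [Fintype m] [DecidableEq m]

private lemma charpolyRev_eq_one (N : Matrix m m S)
    (htor : ∀ (k : ℕ) (x : S), k ≠ 0 → k • x = 0 → x = 0)
    (htr : ∀ k : ℕ, 1 ≤ k → (N ^ k).trace = 0) :
    N.charpolyRev = 1 := by
  nontriviality S
  set N' : Matrix m m S[X] := N.map Polynomial.C with hN'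
  set B : Matrix m m S[X] := 1 - (X : S[X]) • N' with hB
  have hp : N.charpolyRev = B.det := rfl
  have hder : ∀ a i, derivative (B a i) = -Polynomial.C (N a i) := by
    intro a i
    simp only [hB, Matrix.sub_apply, Matrix.smul_apply, Matrix.one_apply, Matrix.map_apply, hN',
      smul_eq_mul]
    split_ifs <;> simp
  have htrN' : ∀ k : ℕ, 1 ≤ k → (N' ^ k).trace = 0 := by
    intro k hk
    have : N' ^ k = (N ^ k).map Polynomial.C := by
      rw [hN']
      exact (map_pow (Polynomial.C.mapMatrix) N k).symm
    rw [this, _root_.trace_map' , htr k hk, map_zero]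
  -- adjugate recursion
  have hadj : B.adjugate = B.det • 1 + (X : S[X]) • (B.adjugate * N') := by
    have h : B.adjugate - (X : S[X]) • (B.adjugate * N') = B.det • 1 := by
      calc B.adjugate - (X : S[X]) • (B.adjugate * N')
          = B.adjugate * (1 - (X : S[X]) • N') := by
            rw [Matrix.mul_sub, Matrix.mul_one, Matrix.mul_smul]
        _ = B.adjugate * B := by rw [← hB]
        _ = B.det • 1 := Matrix.adjugate_mul B
    rw [sub_eq_iff_eq_add] at h
    exact h
  set g : ℕ → S[X] := fun k => (B.adjugate * N' ^ k).trace with hg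
  have grec : ∀ k : ℕ, 1 ≤ k → g k = X * g (k + 1) := by
    intro k hk
    calc g k = ((B.det • 1 + (X : S[X]) • (B.adjugate * N')) * N' ^ k).trace := by
          rw [hg, ← hadj]
      _ = B.det * (N' ^ k).trace + X * g (k + 1) := by
          rw [Matrix.add_mul, Matrix.smul_mul, Matrix.one_mul, Matrix.smul_mul,
            Matrix.trace_add, Matrix.trace_smul, Matrix.trace_smul, smul_eq_mul, smul_eq_mul,
            mul_assoc, ← pow_succ']
      _ = X * g (k + 1) := by rw [htrN' k hk, mul_zero, zero_add]
  have g1eq : ∀ j : ℕ, g 1 = X ^ j * g (1 + j) := by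
    intro j
    induction j with
    | zero => simp
    | succ j ih =>
      rw [ih, grec (1 + j) (by omega), ← mul_assoc, ← pow_succ, ← add_assoc]
  have hg1 : g 1 = 0 := by
    by_contra hne
    set d : ℕ := (g 1).natDegree + 1 with hd
    have heq : g 1 = X ^ d * g (1 + d) := g1eq d
    have hne2 : g (1 + d) ≠ 0 := by
      intro h0
      rw [h0, mul_zero] at heq
      exact hne heq
    have hlc : ((X : S[X]) ^ d).leadingCoeff * (g (1 + d)).leadingCoeff ≠ 0 := by
      rw [Polynomial.monic_X_pow d, one_mul]
      exact Polynomial.leadingCoeff_ne_zero.mpr hne2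
    have := Polynomial.natDegree_mul' hlc
    rw [← heq, Polynomial.natDegree_X_pow] at this
    omega
  have hderdet : derivative B.det = 0 := by
    rw [jacobi_det]
    have : ∀ i, (B.updateCol i fun a => derivative (B a i)).det
        = -(B.updateCol i fun a => Polynomial.C (N a i)).det := by
      intro i
      have h1 : (fun a => derivative (B a i)) = (-1 : S[X]) • fun a => Polynomial.C (N a i) := by
        funext a; simp [hder]
      rw [h1, Matrix.det_updateCol_smul]
      ring
    simp_rw [this]
    have : ∀ i, (B.updateCol i fun a => Polynomial.C (N a i)).det
        = (B.adjugate.mulVec fun a => Polynomial.C (N a i)) i := by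
      intro i
      rw [← Matrix.cramer_eq_adjugate_mulVec, Matrix.cramer_apply]
    simp_rw [this]
    have : ∑ i, (B.adjugate.mulVec fun a => Polynomial.C (N a i)) i = g 1 := by
      rw [hg]
      simp only [Matrix.mulVec, Matrix.trace, Matrix.diag, Matrix.mul_apply, dotProduct]
      refine Finset.sum_congr rfl fun i _ => Finset.sum_congr rfl fun a _ => ?_
      simp [hN', Matrix.map_apply, pow_one]
    rw [Finset.sum_neg_distrib, this, hg1, neg_zero]
  have hcoeff : ∀ k : ℕ, B.det.coeff (k + 1) = 0 := by
    intro k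
    have h1 : (derivative B.det).coeff k = 0 := by rw [hderdet, Polynomial.coeff_zero]
    rw [Polynomial.coeff_derivative] at h1
    refine htor (k + 1) _ (by omega) ?_
    rw [nsmul_eq_mul]
    rw [mul_comm]
    convert h1 using 2
    push_cast
    ring
  have h0 : B.det.coeff 0 = 1 := by
    rw [Polynomial.coeff_zero_eq_eval_zero, ← hp, Matrix.eval_charpolyRev]
  rw [hp]
  ext k
  cases k with
  | zero => simpa using h0
  | succ k => rw [hcoeff k, Polynomial.coeff_one, if_neg (by omega)]

private lemma pow_card_eq_zero_of_trace_pow (N : Matrix m m S)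
    (htor : ∀ (k : ℕ) (x : S), k ≠ 0 → k • x = 0 → x = 0)
    (htr : ∀ k : ℕ, 1 ≤ k → (N ^ k).trace = 0) :
    N ^ (Fintype.card m) = 0 := by
  nontriviality S
  have h1 := charpolyRev_eq_one N htor htr
  have h2 : N.charpoly.reverse = 1 := by rw [Matrix.reverse_charpoly, h1]
  have hdeg : N.charpoly.natDegree = Fintype.card m := N.charpoly_natDegree_eq_dim
  have hcp : N.charpoly = (X : S[X]) ^ (Fintype.card m) := by
    ext k
    rw [Polynomial.coeff_X_pow]
    rcases lt_trichotomy k (Fintype.card m) with hlt | heq | hgt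
    · have hrev : N.charpoly.reverse.coeff (Fintype.card m - k) = N.charpoly.coeff k := by
        rw [Polynomial.coeff_reverse, hdeg, Polynomial.revAt_le (by omega)]
        congr 1
        omega
      rw [h2] at hrev
      rw [← hrev, Polynomial.coeff_one, if_neg (by omega), if_neg (by omega)]
    · subst heq
      rw [if_pos rfl, ← hdeg]
      exact N.charpoly_monic.coeff_natDegree
    · rw [Polynomial.coeff_eq_zero_of_natDegree_lt (by omega), if_neg (by omega)]
  have := N.aeval_self_charpoly
  rw [hcp] at this
  simpa using this

end Nilpotency
section Rosset

private lemma torsion_free {R M : Type*} [CommRing R] [Algebra ℚ R] [AddCommGroup M]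
    [Module R M] (k : ℕ) (hk : k ≠ 0) (x : M) (h : k • x = 0) : x = 0 := by
  rw [← Nat.cast_smul_eq_nsmul R] at h
  have hu : IsUnit (k : R) := by
    have h1 : ((k : ℚ) : ℚ) ≠ 0 := by exact_mod_cast hk
    have h2 : (k : R) = algebraMap ℚ R (k : ℚ) := by rw [map_natCast]
    rw [h2]
    exact (isUnit_iff_ne_zero.mpr h1).map (algebraMap ℚ R)
  obtain ⟨u, hu⟩ := hu
  calc x = u⁻¹ • (u • x) := (inv_smul_smul u x).symm
    _ = u⁻¹ • ((k : R) • x) := by rw [Units.smul_def u x, hu]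
    _ = 0 := by rw [h, smul_zero]

variable {R : Type*} [CommRing R]

private noncomputable def ee (R : Type*) [CommRing R] {N : ℕ} (i : Fin N) :
    ExteriorAlgebra R (Fin N → R) :=
  ExteriorAlgebra.ι R (Pi.single i 1)

private noncomputable def ww (R : Type*) [CommRing R] {N k : ℕ} (f : Fin k → Fin N) :
    ExteriorAlgebra R (Fin N → R) :=
  (List.ofFn fun t => ee R (f t)).prod

private def PP {N m k : ℕ} (X : Fin N → Matrix (Fin m) (Fin m) R) (f : Fin k → Fin N) :
    Matrix (Fin m) (Fin m) R :=
  (List.ofFn fun t => X (f t)).prod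

private noncomputable def MM {N m : ℕ} (X : Fin N → Matrix (Fin m) (Fin m) R) :
    Matrix (Fin m) (Fin m) (ExteriorAlgebra R (Fin N → R)) :=
  Matrix.of fun i j => ∑ c, X c i j • ee R c

private lemma iota_swap {N : ℕ} (x y : Fin N → R) :
    ExteriorAlgebra.ι R x * ExteriorAlgebra.ι R y
      = -(ExteriorAlgebra.ι R y * ExteriorAlgebra.ι R x) :=
  eq_neg_of_add_eq_zero_left (ExteriorAlgebra.ι_add_mul_swap x y)

private lemma ee_swap {N : ℕ} (a b : Fin N) : ee R a * ee R b = -(ee R b * ee R a) :=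
  iota_swap _ _

private lemma ee_mul_word {N : ℕ} (a : Fin N) (L : List (Fin N)) :
    ee R a * (L.map (ee R)).prod
      = ((-1 : ℤ) ^ L.length) • ((L.map (ee R)).prod * ee R a) := by
  induction L with
  | nil => simp
  | cons b L ih =>
    simp only [List.map_cons, List.prod_cons, List.length_cons]
    rw [← mul_assoc, ee_swap a b, neg_mul, mul_assoc, ih]
    rw [mul_smul_comm, ← mul_assoc]
    rw [← neg_smul]
    rw [pow_succ]
    congr 1
    ring

private def consEq (k N : ℕ) : (Fin N) × (Fin k → Fin N) ≃ (Fin (k + 1) → Fin N) where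
  toFun p := Fin.cons p.1 p.2
  invFun f := (f 0, fun j => f j.succ)
  left_inv p := by
    refine Prod.ext ?_ ?_
    · simp
    · funext j; simp
  right_inv f := Fin.cons_self_tail f

private def snocEq (k N : ℕ) : (Fin N) × (Fin k → Fin N) ≃ (Fin (k + 1) → Fin N) where
  toFun p := Fin.snoc p.2 p.1
  invFun f := (f (Fin.last k), fun j => f j.castSucc)
  left_inv p := by
    refine Prod.ext ?_ ?_
    · simp
    · funext j; simp
  right_inv f := Fin.snoc_init_self f

private lemma PP_cons {N m k : ℕ} (X : Fin N → Matrix (Fin m) (Fin m) R)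
    (a : Fin N) (f : Fin k → Fin N) :
    PP X (Fin.cons a f) = X a * PP X f := by
  unfold PP
  rw [List.ofFn_succ]
  simp [Fin.cons_zero, Fin.cons_succ]

private lemma ww_cons {N k : ℕ} (a : Fin N) (f : Fin k → Fin N) :
    ww R (Fin.cons a f) = ee R a * ww R f := by
  unfold ww
  rw [List.ofFn_succ]
  simp [Fin.cons_zero, Fin.cons_succ]

private lemma PP_snoc {N m k : ℕ} (X : Fin N → Matrix (Fin m) (Fin m) R)
    (a : Fin N) (f : Fin k → Fin N) :
    PP X (Fin.snoc f a) = PP X f * X a := by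
  unfold PP
  rw [List.ofFn_succ']
  simp [Fin.snoc_castSucc, Fin.snoc_last]

private lemma ww_snoc {N k : ℕ} (a : Fin N) (f : Fin k → Fin N) :
    ww R (Fin.snoc f a) = ww R f * ee R a := by
  unfold ww
  rw [List.ofFn_succ']
  simp [Fin.snoc_castSucc, Fin.snoc_last]

private lemma ww_eq_map_prod {N k : ℕ} (f : Fin k → Fin N) :
    ww R f = ((List.ofFn f).map (ee R)).prod := by
  unfold ww
  rw [List.map_ofFn]
  rfl

private lemma MM_pow {N m : ℕ} (X : Fin N → Matrix (Fin m) (Fin m) R) (k : ℕ) :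
    (MM X) ^ k = ∑ f : Fin k → Fin N, Matrix.of fun i j => PP X f i j • ww R f := by
  induction k with
  | zero =>
    rw [pow_zero, Finset.univ_unique, Finset.sum_singleton]
    ext i j
    simp only [Matrix.of_apply]
    have h1 : PP X (default : Fin 0 → Fin N) = 1 := by
      unfold PP; simp
    have h2 : ww R (default : Fin 0 → Fin N) = 1 := by
      unfold ww; simp
    rw [h1, h2, Matrix.one_apply, Matrix.one_apply]
    split_ifs <;> simp
  | succ k ih =>
    have key : ∀ f : Fin k → Fin N,
        (MM X) * (Matrix.of fun i j => PP X f i j • ww R f)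
          = ∑ c : Fin N, Matrix.of fun i j =>
              PP X (Fin.cons c f) i j • ww R (Fin.cons c f) := by
      intro f
      ext i j
      rw [Matrix.mul_apply, Matrix.sum_apply]
      simp only [Matrix.of_apply, MM]
      calc ∑ l, (∑ c, X c i l • ee R c) * (PP X f l j • ww R f)
          = ∑ l, ∑ c, (X c i l • ee R c) * (PP X f l j • ww R f) := by
            simp_rw [Finset.sum_mul]
        _ = ∑ c, ∑ l, (X c i l * PP X f l j) • (ee R c * ww R f) := by
            rw [Finset.sum_comm]
            simp_rw [smul_mul_smul_comm]
        _ = ∑ c, (X c * PP X f) i j • (ee R c * ww R f) := by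
            simp_rw [Matrix.mul_apply, Finset.sum_smul]
        _ = ∑ c, PP X (Fin.cons c f) i j • ww R (Fin.cons c f) := by
            simp_rw [PP_cons, ww_cons]
    rw [pow_succ', ih, Finset.mul_sum]
    simp_rw [key]
    rw [Finset.sum_comm]
    rw [← Equiv.sum_comp (consEq k N) (fun f => Matrix.of fun i j => PP X f i j • ww R f)]
    rw [Fintype.sum_prod_type]
    rfl

private lemma trace_MM_pow {N m : ℕ} (X : Fin N → Matrix (Fin m) (Fin m) R) (k : ℕ) :
    ((MM X) ^ k).trace = ∑ f : Fin k → Fin N, (PP X f).trace • ww R f := by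
  rw [MM_pow, Matrix.trace_sum]
  refine Finset.sum_congr rfl fun f _ => ?_
  rw [Matrix.trace, Matrix.trace]
  simp only [Matrix.diag, Matrix.of_apply]
  rw [Finset.sum_smul]

private lemma trace_MM_pow_eq_zero {N m : ℕ} [Algebra ℚ R]
    (X : Fin N → Matrix (Fin m) (Fin m) R) (k : ℕ) (hk : 1 ≤ k) (hke : Even k) :
    ((MM X) ^ k).trace = 0 := by
  obtain ⟨l, rfl⟩ : ∃ l, k = l + 1 := ⟨k - 1, (by omega)⟩
  have hlodd : Odd l := by
    rcases hke with ⟨c, hc⟩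
    exact ⟨c - 1, by omega⟩
  set T := ((MM X) ^ (l + 1)).trace with hT
  set t : (Fin (l + 1) → Fin N) → ExteriorAlgebra R (Fin N → R) :=
    fun f => (PP X f).trace • ww R f with ht
  have hTt : T = ∑ f : Fin (l + 1) → Fin N, t f := trace_MM_pow X (l + 1)
  have hkey : ∀ (a : Fin N) (g : Fin l → Fin N),
      t (Fin.cons a g) = -t (Fin.snoc g a) := by
    intro a g
    rw [ht]
    simp only
    rw [PP_cons, PP_snoc, ww_cons, ww_snoc]
    rw [Matrix.trace_mul_comm]
    rw [ww_eq_map_prod, ee_mul_word, ← ww_eq_map_prod]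
    have hlen : (List.ofFn g).length = l := List.length_ofFn
    rw [hlen, hlodd.neg_one_pow, neg_one_zsmul, smul_neg]
  have h1 : T = ∑ p : (Fin N) × (Fin l → Fin N), t (Fin.cons p.1 p.2) := by
    rw [hTt, ← Equiv.sum_comp (consEq l N) t]
    rfl
  have h2 : T = ∑ p : (Fin N) × (Fin l → Fin N), t (Fin.snoc p.2 p.1) := by
    rw [hTt, ← Equiv.sum_comp (snocEq l N) t]
    rfl
  have h3 : T = -T := by
    calc T = ∑ p : (Fin N) × (Fin l → Fin N), t (Fin.cons p.1 p.2) := h1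
      _ = ∑ p : (Fin N) × (Fin l → Fin N), -t (Fin.snoc p.2 p.1) := by
          refine Finset.sum_congr rfl fun p _ => hkey p.1 p.2
      _ = -T := by rw [Finset.sum_neg_distrib, ← h2]
  have h4 : (2 : ℕ) • T = 0 := by
    rw [two_smul]
    nth_rewrite 1 [h3]
    exact neg_add_cancel T
  exact torsion_free (R := R) 2 (by omega) T h4

private lemma pow_eq_zero_of_comm_subalg {R E : Type*} [CommRing R] [Algebra ℚ R] [Ring E]
    [Algebra R E] (CC : Subalgebra R E)
    (hCC : ∀ x ∈ CC, ∀ y ∈ CC, x * y = y * x)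
    {m : ℕ} (M : Matrix (Fin m) (Fin m) E) (hmem : ∀ i j, M i j ∈ CC)
    (htr0 : ∀ k : ℕ, 1 ≤ k → ((M ^ k).trace = (0 : E))) :
    M ^ m = 0 := by
  letI : CommRing ↥CC := { (inferInstance : Ring ↥CC) with
    mul_comm := fun x y => Subtype.ext (hCC _ x.2 _ y.2) }
  set NN : Matrix (Fin m) (Fin m) ↥CC := Matrix.of fun i j => ⟨M i j, hmem i j⟩ with hNN
  have hmapNN : NN.map (⇑CC.val) = M := by
    ext i j
    rfl
  have hmappow : ∀ k : ℕ, (NN ^ k).map (⇑CC.val) = M ^ k := by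
    intro k
    rw [← hmapNN]
    have := map_pow (CC.val.toRingHom.mapMatrix) NN k
    simpa [RingHom.mapMatrix_apply] using this
  have htor : ∀ (k : ℕ) (x : ↥CC), k ≠ 0 → k • x = 0 → x = 0 := by
    intro k x hk h
    have h2 : k • (x : E) = 0 := by
      have := congrArg Subtype.val h
      simpa using this
    exact Subtype.ext (torsion_free (R := R) k hk _ h2)
  have htrNN : ∀ k : ℕ, 1 ≤ k → (NN ^ k).trace = 0 := by
    intro k hk
    have h1 : CC.val ((NN ^ k).trace) = 0 := by
      have h2 := trace_map' CC.val.toRingHom (NN ^ k)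
      show CC.val.toRingHom ((NN ^ k).trace) = 0
      rw [← h2]
      have h3 : (NN ^ k).map ⇑CC.val.toRingHom = M ^ k := hmappow k
      rw [h3]
      exact htr0 k hk
    exact Subtype.ext (by simpa using h1)
  have hfin := pow_card_eq_zero_of_trace_pow NN htor htrNN
  rw [Fintype.card_fin] at hfin
  calc M ^ m = (NN ^ m).map (⇑CC.val) := (hmappow m).symm
    _ = 0 := by
      rw [hfin]
      ext i j
      simp

end Rosset
section ALrat

private lemma comm_of_anticomm {E : Type*} [Ring E] (a b c d : E)
    (hac : a * c = -(c * a)) (had : a * d = -(d * a))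
    (hbc : b * c = -(c * b)) (hbd : b * d = -(d * b)) :
    a * b * (c * d) = c * d * (a * b) := by
  have Hbc : ∀ z : E, b * (c * z) = -(c * (b * z)) := fun z => by
    rw [← mul_assoc, hbc, neg_mul, mul_assoc]
  have Hac : ∀ z : E, a * (c * z) = -(c * (a * z)) := fun z => by
    rw [← mul_assoc, hac, neg_mul, mul_assoc]
  have Had : ∀ z : E, a * (d * z) = -(d * (a * z)) := fun z => by
    rw [← mul_assoc, had, neg_mul, mul_assoc]
  calc a * b * (c * d) = a * (b * (c * d)) := by rw [mul_assoc]
    _ = -(a * (c * (b * d))) := by rw [Hbc d, mul_neg]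
    _ = -(-(c * (a * (b * d)))) := by rw [Hac (b * d)]
    _ = c * (a * (b * d)) := by rw [neg_neg]
    _ = -(c * (a * (d * b))) := by rw [hbd, mul_neg, mul_neg]
    _ = -(-(c * (d * (a * b)))) := by rw [Had b, mul_neg]
    _ = c * d * (a * b) := by rw [neg_neg, mul_assoc]

set_option maxHeartbeats 1000000 in
private lemma AL_rat {R : Type*} [CommRing R] [Algebra ℚ R] (n : ℕ)
    (A : Matrix (Fin n) (Fin n) R) (X : Fin (2 * n) → Matrix (Fin n) (Fin n) R) :
    lhsSum n A X = 0 := by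
  classical
  unfold lhsSum
  set sC : Set (ExteriorAlgebra R (Fin (2 * n) → R)) :=
    {x | ∃ a b : Fin (2 * n) → R, x = ExteriorAlgebra.ι R a * ExteriorAlgebra.ι R b} with hsC
  have hcomm : ∀ x ∈ sC, ∀ y ∈ sC, x * y = y * x := by
    rintro _ ⟨a, b, rfl⟩ _ ⟨c, d, rfl⟩
    exact comm_of_anticomm _ _ _ _ (iota_swap a c) (iota_swap a d)
      (iota_swap b c) (iota_swap b d)
  letI : CommRing ↥(Algebra.adjoin R sC) := Algebra.adjoinCommRingOfComm R hcomm
  have hCC : ∀ x ∈ Algebra.adjoin R sC, ∀ y ∈ Algebra.adjoin R sC, x * y = y * x :=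
    fun x hx y hy =>
      congrArg Subtype.val (mul_comm (⟨x, hx⟩ : Algebra.adjoin R sC) (⟨y, hy⟩ : _))
  have hmem : ∀ i j, ((MM X ^ 2) i j) ∈ Algebra.adjoin R sC := by
    intro i j
    rw [MM_pow X 2]
    rw [Matrix.sum_apply]
    refine Subalgebra.sum_mem _ fun f _ => ?_
    have hwf : ww R f ∈ sC := by
      refine ⟨Pi.single (f 0) 1, Pi.single (f 1) 1, ?_⟩
      unfold ww ee
      rw [List.ofFn_succ, List.ofFn_succ]
      simp
    exact Subalgebra.smul_mem _ (Algebra.subset_adjoin hwf) _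
  have htrM2 : ∀ k : ℕ, 1 ≤ k →
      (((MM X ^ 2) ^ k).trace = (0 : ExteriorAlgebra R (Fin (2 * n) → R))) := by
    intro k hk
    rw [← pow_mul]
    exact trace_MM_pow_eq_zero X (2 * k) (by omega) ⟨k, by omega⟩
  have hMM2n : MM X ^ (2 * n) = 0 := by
    rw [pow_mul]
    exact pow_eq_zero_of_comm_subalg (Algebra.adjoin R sC) hCC (MM X ^ 2) hmem htrM2
  have hsum : ∑ f : Fin (2 * n) → Fin (2 * n),
      (Matrix.of fun i j => PP X f i j • ww R f) = 0 := by
    rw [← MM_pow]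
    exact hMM2n
  -- the extraction functional
  set φ : ExteriorAlgebra R (Fin (2 * n) → R) →ₗ[R] R :=
    ExteriorAlgebra.liftAlternating
      (Pi.single (2 * n) (Matrix.detRowAlternating (n := Fin (2 * n)) (R := R))) with hφ
  have hww_im : ∀ (k : ℕ) (f : Fin k → Fin (2 * n)),
      ww R f = ExteriorAlgebra.ιMulti R k (fun t => Pi.single (f t) 1) := by
    intro k f
    rw [ExteriorAlgebra.ιMulti_apply]
    rfl
  have hφtop : φ (ww R (id : Fin (2 * n) → Fin (2 * n))) = 1 := by
    rw [hww_im, hφ, ExteriorAlgebra.liftAlternating_apply_ιMulti, Pi.single_eq_same]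
    show (Matrix.of fun t : Fin (2 * n) => Pi.single (id t) (1 : R)).det = 1
    have : (Matrix.of fun t : Fin (2 * n) => Pi.single (id t) (1 : R))
        = (1 : Matrix (Fin (2 * n)) (Fin (2 * n)) R) := by
      ext i j
      rw [Matrix.of_apply, Matrix.one_apply, Pi.single_apply]
      simp [eq_comm]
    rw [this, Matrix.det_one]
  have hwzero : ∀ f : Fin (2 * n) → Fin (2 * n), ¬Function.Injective f → ww R f = 0 := by
    intro f hf
    rw [hww_im]
    refine AlternatingMap.map_eq_zero_of_not_injective _ _ ?_
    intro hinj
    exact hf fun i j hij =>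
      hinj (congrArg (fun x : Fin (2 * n) => Pi.single x (1 : R)) hij)
  have hwperm : ∀ σ : Equiv.Perm (Fin (2 * n)),
      ww R (⇑σ) = ((Equiv.Perm.sign σ : ℤ)) • ww R (id : Fin (2 * n) → Fin (2 * n)) := by
    intro σ
    rw [hww_im, hww_im]
    have := AlternatingMap.map_perm (ExteriorAlgebra.ιMulti R (2 * n))
      (fun t => Pi.single (t : Fin (2 * n)) (1 : R)) σ
    rw [Units.smul_def] at this
    simpa [Function.comp_def] using this
  -- entrywise vanishing of the standard polynomial
  have hentry : ∀ i j, ∑ σ : Equiv.Perm (Fin (2 * n)),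
      ((Equiv.Perm.sign σ : ℤ) : R) * PP X (⇑σ) i j = 0 := by
    intro i j
    have h0 : ∑ f : Fin (2 * n) → Fin (2 * n), PP X f i j • ww R f = 0 := by
      have := congrArg (fun Mm : Matrix (Fin n) (Fin n) (ExteriorAlgebra R (Fin (2 * n) → R))
        => Mm i j) hsum
      simpa [Matrix.sum_apply] using this
    rw [← Finset.sum_filter_of_ne
      (p := fun f : Fin (2 * n) → Fin (2 * n) => Function.Injective f)
      (fun f _ hne => by
        by_contra hni
        exact hne (by rw [hwzero f hni, smul_zero]))] at h0
    have himg : (Finset.univ.filter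
          (fun f : Fin (2 * n) → Fin (2 * n) => Function.Injective f))
        = Finset.univ.image (fun σ : Equiv.Perm (Fin (2 * n)) => ⇑σ) := by
      ext f
      simp only [Finset.mem_filter, Finset.mem_univ, true_and, Finset.mem_image]
      constructor
      · intro hf
        have hb : Function.Bijective f := (Finite.injective_iff_bijective).mp hf
        exact ⟨Equiv.ofBijective f hb, rfl⟩
      · rintro ⟨σ, rfl⟩
        exact σ.injective
    rw [himg, Finset.sum_image (fun σ _ τ _ h => Equiv.coe_fn_injective h)] at h0
    have h1 : ∀ σ : Equiv.Perm (Fin (2 * n)),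
        PP X (⇑σ) i j • ww R ⇑σ
          = (PP X (⇑σ) i j * ((Equiv.Perm.sign σ : ℤ) : R))
              • ww R (id : Fin (2 * n) → Fin (2 * n)) := by
      intro σ
      rw [hwperm σ, ← Int.cast_smul_eq_zsmul R, smul_smul]
    simp_rw [h1] at h0
    rw [← Finset.sum_smul] at h0
    have h2 := congrArg φ h0
    rw [_root_.map_smul, hφtop, smul_eq_mul, mul_one, map_zero] at h2
    rw [← h2]
    refine Finset.sum_congr rfl fun σ _ => mul_comm _ _
  -- assemble
  have hmat : ∑ σ : Equiv.Perm (Fin (2 * n)),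
      ((Equiv.Perm.sign σ : ℤ) : R) • PP X (⇑σ) = (0 : Matrix (Fin n) (Fin n) R) := by
    ext i j
    rw [Matrix.sum_apply]
    simp only [Matrix.smul_apply, Matrix.zero_apply, smul_eq_mul]
    exact hentry i j
  have hPP : ∀ σ : Equiv.Perm (Fin (2 * n)),
      (List.ofFn fun i => X (σ i)).prod = PP X (⇑σ) := fun σ => rfl
  calc ∑ σ : Equiv.Perm (Fin (2 * n)),
        (Equiv.Perm.sign σ : ℤ) • (A * (List.ofFn fun i => X (σ i)).prod).trace
      = ∑ σ : Equiv.Perm (Fin (2 * n)),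
          (A * (((Equiv.Perm.sign σ : ℤ) : R) • PP X (⇑σ))).trace := by
        refine Finset.sum_congr rfl fun σ _ => ?_
        rw [hPP, mul_smul_comm, Matrix.trace_smul, Int.cast_smul_eq_zsmul]
    _ = (A * ∑ σ : Equiv.Perm (Fin (2 * n)),
          ((Equiv.Perm.sign σ : ℤ) : R) • PP X (⇑σ)).trace := by
        rw [Finset.mul_sum, Matrix.trace_sum]
    _ = 0 := by rw [hmat, Matrix.mul_zero, Matrix.trace_zero]

end ALrat
section Transfer

private lemma lhsSum_map {S T : Type*} [CommRing S] [CommRing T] (f : S →+* T) (n : ℕ)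
    (A : Matrix (Fin n) (Fin n) S) (X : Fin (2 * n) → Matrix (Fin n) (Fin n) S) :
    f (lhsSum n A X) = lhsSum n (A.map f) (fun k => (X k).map f) := by
  unfold lhsSum
  rw [map_sum]
  refine Finset.sum_congr rfl fun σ _ => ?_
  rw [map_zsmul]
  congr 1
  rw [← trace_map' f]
  congr 1
  have h2 := map_list_prod (f.mapMatrix) (List.ofFn fun i => X (σ i))
  have h1 := map_mul (f.mapMatrix) A (List.ofFn fun i => X (σ i)).prod
  simp only [RingHom.mapMatrix_apply] at h1 h2
  rw [h1, h2, List.map_ofFn]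
  rfl

private lemma AL_int {V : Type*} (n : ℕ)
    (A : Matrix (Fin n) (Fin n) (MvPolynomial V ℤ))
    (X : Fin (2 * n) → Matrix (Fin n) (Fin n) (MvPolynomial V ℤ)) :
    lhsSum n A X = 0 := by
  have h := lhsSum_map
    (MvPolynomial.map (Int.castRingHom ℚ) : MvPolynomial V ℤ →+* MvPolynomial V ℚ) n A X
  have h0 : lhsSum n (A.map ⇑(MvPolynomial.map (Int.castRingHom ℚ)))
      (fun k => (X k).map ⇑(MvPolynomial.map (Int.castRingHom ℚ))) = 0 :=
    AL_rat n (A.map ⇑(MvPolynomial.map (Int.castRingHom ℚ)))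
      (fun k => (X k).map ⇑(MvPolynomial.map (Int.castRingHom ℚ)))
  refine MvPolynomial.map_injective (Int.castRingHom ℚ) Int.cast_injective ?_
  rw [map_zero, h, h0]

end Transfer

/-- Traced Amitsur–Levitzki identity: for `n × n` matrices `A, X₁, …, X_{2n}`,
`∑_{σ ∈ S_{2n}} sgn(σ) · tr(A · X_{σ(1)} ⋯ X_{σ(2n)}) = 0`. -/
theorem traced_amitsur_levitzki {R : Type*} [CommRing R] (n : ℕ)
    (A : Matrix (Fin n) (Fin n) R) (X : Fin (2 * n) → Matrix (Fin n) (Fin n) R) :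
    ∑ σ : Equiv.Perm (Fin (2 * n)),
      (Equiv.Perm.sign σ : ℤ) • (A * (List.ofFn fun i => X (σ i)).prod).trace = 0 := by
  classical
  set V := (Fin n × Fin n) ⊕ (Fin (2 * n) × Fin n × Fin n) with hV
  set val : V → R := fun v =>
    Sum.rec (fun p => A p.1 p.2) (fun p => X p.1 p.2.1 p.2.2) v with hval
  set φZ : MvPolynomial V ℤ →+* R := (MvPolynomial.aeval val).toRingHom with hφZ
  set A₀ : Matrix (Fin n) (Fin n) (MvPolynomial V ℤ) :=
    Matrix.of fun i j => MvPolynomial.X (Sum.inl (i, j)) with hA₀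
  set X₀ : Fin (2 * n) → Matrix (Fin n) (Fin n) (MvPolynomial V ℤ) :=
    fun k => Matrix.of fun i j => MvPolynomial.X (Sum.inr (k, i, j)) with hX₀
  have hA : A₀.map ⇑φZ = A := by
    ext i j
    simp [hA₀, hφZ, hval, Matrix.map_apply]
  have hX : ∀ k, (X₀ k).map ⇑φZ = X k := by
    intro k
    ext i j
    simp [hX₀, hφZ, hval, Matrix.map_apply]
  show lhsSum n A X = 0
  calc lhsSum n A X = lhsSum n (A₀.map ⇑φZ) (fun k => (X₀ k).map ⇑φZ) := by
        rw [hA]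
        congr 1
        funext k
        rw [hX k]
    _ = φZ (lhsSum n A₀ X₀) := (lhsSum_map φZ n A₀ X₀).symm
    _ = 0 := by rw [AL_int, map_zero]
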